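/- There exist a constant c₀ > 0 and N ∈ ℕ such that for all n ≥ N the following holds: if w₀, w₁, …, w_n are independent standard Gaussian random variables N(0,1), and f : {−1,1}^n → {−1,1} is the random linear threshold function f(x) = sign(w₀ + Σ_{i=1}^n w_i x_i), then with probability at least 1 − 4/n over the choice of the weights, Inf(f) ≥ c₀·√(n/log n). -/

import Mathlib

open Finset Real MeasureTheory ProbabilityTheory
open scoped Classical

/-- sign: maps z to 1 if z > 0 and to −1 if z ≤ 0. -/
noncomputable def sgn (z : ℝ) : ℝ := if 0 < z then 1 else -1

/-- interpret a Bool as ±1. -/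
def pm (b : Bool) : ℝ := if b then 1 else -1

/-- probability of an event under the uniform distribution on {−1,1}^n. -/
noncomputable def unifPr (n : ℕ) (E : (Fin n → Bool) → Prop) : ℝ :=
  ((Finset.univ : Finset (Fin n → Bool)).filter E).card / 2 ^ n

/-- expectation under the uniform distribution on {−1,1}^n. -/
noncomputable def unifExp (n : ℕ) (g : (Fin n → Bool) → ℝ) : ℝ :=
  (∑ x : Fin n → Bool, g x) / 2 ^ n

/-- flip the i-th coordinate. -/
def flipAt {n : ℕ} (i : Fin n) (x : Fin n → Bool) : Fin n → Bool :=
  Function.update x i (!(x i))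

/-- influence of coordinate i. -/
noncomputable def infl {n : ℕ} (f : (Fin n → Bool) → ℝ) (i : Fin n) : ℝ :=
  unifPr n (fun x => f x ≠ f (flipAt i x))

/-- total influence. -/
noncomputable def totalInfl {n : ℕ} (f : (Fin n → Bool) → ℝ) : ℝ :=
  ∑ i, infl f i

/-- Fourier coefficient f̂(S). -/
noncomputable def fCoeff {n : ℕ} (f : (Fin n → Bool) → ℝ) (S : Finset (Fin n)) : ℝ :=
  unifExp n (fun x => f x * ∏ i ∈ S, pm (x i))

/-- Fourier entropy with log base 2 (0 · log(1/0) is 0 by convention, which holds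
definitionally since `Real.log 0 = 0` in Mathlib). -/
noncomputable def fourierEntropy {n : ℕ} (f : (Fin n → Bool) → ℝ) : ℝ :=
  ∑ S : Finset (Fin n), (fCoeff f S) ^ 2 * Real.logb 2 (1 / (fCoeff f S) ^ 2)

/-- The linear threshold function with weights w₀, w₁, …, w_n. -/
noncomputable def ltf (n : ℕ) (w : Fin (n + 1) → ℝ) : (Fin n → Bool) → ℝ :=
  fun x => sgn (w 0 + ∑ i : Fin n, w i.succ * pm (x i))

section Hypercube

variable {n : ℕ}

lemma pm_sq (b : Bool) : pm b ^ 2 = 1 := by cases b <;> simp [pm]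

lemma pm_abs (b : Bool) : |pm b| = 1 := by cases b <;> simp [pm]

lemma pm_not (b : Bool) : pm (!b) = - pm b := by cases b <;> simp [pm]

lemma flipAt_self (a : Fin n) (x : Fin n → Bool) : flipAt a x a = !(x a) := by
  simp [flipAt]

lemma flipAt_ne (a : Fin n) (x : Fin n → Bool) {j : Fin n} (h : j ≠ a) :
    flipAt a x j = x j := by
  simp [flipAt, Function.update_of_ne h]

lemma flipAt_involutive (a : Fin n) : Function.Involutive (flipAt a) := by
  intro x; funext j
  by_cases h : j = a
  · subst h; simp [flipAt_self, flipAt_ne]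
  · simp [flipAt_ne a _ h]

lemma sum_flip (a : Fin n) (g : (Fin n → Bool) → ℝ) :
    ∑ x : Fin n → Bool, g (flipAt a x) = ∑ x : Fin n → Bool, g x :=
  Fintype.sum_bijective _ (flipAt_involutive a).bijective _ _ (fun _ => rfl)

lemma card_cube : ((Finset.univ : Finset (Fin n → Bool)).card : ℝ) = 2 ^ n := by
  simp [Finset.card_univ]

lemma sum_sq_step (a : Fin n) (q : (Fin n → Bool) → ℝ)
    (hq : ∀ x, q (flipAt a x) = q x) (c : ℝ) :
    ∑ x : Fin n → Bool, (q x + c * pm (x a)) ^ 2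
      = (∑ x : Fin n → Bool, q x ^ 2) + c ^ 2 * 2 ^ n := by
  have h1 : ∑ x : Fin n → Bool, (q x + c * pm (x a)) ^ 2
      = ∑ x : Fin n → Bool, (q x - c * pm (x a)) ^ 2 := by
    rw [← sum_flip a fun x => (q x + c * pm (x a)) ^ 2]
    refine Finset.sum_congr rfl fun x _ => ?_
    rw [hq, flipAt_self, pm_not]; ring
  have h3 : (2:ℝ) * ∑ x : Fin n → Bool, (q x + c * pm (x a)) ^ 2
      = 2 * (∑ x : Fin n → Bool, q x ^ 2) + 2 * c ^ 2 * 2 ^ n := by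
    calc (2:ℝ) * ∑ x : Fin n → Bool, (q x + c * pm (x a)) ^ 2
        = (∑ x : Fin n → Bool, (q x + c * pm (x a)) ^ 2)
          + ∑ x : Fin n → Bool, (q x - c * pm (x a)) ^ 2 := by rw [← h1]; ring
      _ = ∑ x : Fin n → Bool, ((q x + c * pm (x a)) ^ 2 + (q x - c * pm (x a)) ^ 2) :=
          (Finset.sum_add_distrib).symm
      _ = ∑ x : Fin n → Bool, (2 * q x ^ 2 + 2 * c ^ 2) := by
          refine Finset.sum_congr rfl fun x _ => ?_
          have h := pm_sq (x a)
          linear_combination 2 * c ^ 2 * h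
      _ = 2 * (∑ x : Fin n → Bool, q x ^ 2) + 2 * c ^ 2 * 2 ^ n := by
          rw [Finset.sum_add_distrib, Finset.mul_sum, Finset.sum_const, nsmul_eq_mul, card_cube]
          ring
  linarith

lemma sum_pow4_step (a : Fin n) (q : (Fin n → Bool) → ℝ)
    (hq : ∀ x, q (flipAt a x) = q x) (c : ℝ) :
    ∑ x : Fin n → Bool, (q x + c * pm (x a)) ^ 4
      = (∑ x : Fin n → Bool, q x ^ 4) + 6 * c ^ 2 * (∑ x : Fin n → Bool, q x ^ 2)
        + c ^ 4 * 2 ^ n := by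
  have h1 : ∑ x : Fin n → Bool, (q x + c * pm (x a)) ^ 4
      = ∑ x : Fin n → Bool, (q x - c * pm (x a)) ^ 4 := by
    rw [← sum_flip a fun x => (q x + c * pm (x a)) ^ 4]
    refine Finset.sum_congr rfl fun x _ => ?_
    rw [hq, flipAt_self, pm_not]; ring
  have h3 : (2:ℝ) * ∑ x : Fin n → Bool, (q x + c * pm (x a)) ^ 4
      = 2 * (∑ x : Fin n → Bool, q x ^ 4) + 12 * c ^ 2 * (∑ x : Fin n → Bool, q x ^ 2)
        + 2 * c ^ 4 * 2 ^ n := by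
    calc (2:ℝ) * ∑ x : Fin n → Bool, (q x + c * pm (x a)) ^ 4
        = (∑ x : Fin n → Bool, (q x + c * pm (x a)) ^ 4)
          + ∑ x : Fin n → Bool, (q x - c * pm (x a)) ^ 4 := by rw [← h1]; ring
      _ = ∑ x : Fin n → Bool, ((q x + c * pm (x a)) ^ 4 + (q x - c * pm (x a)) ^ 4) :=
          (Finset.sum_add_distrib).symm
      _ = ∑ x : Fin n → Bool, (2 * q x ^ 4 + 12 * c ^ 2 * q x ^ 2 + 2 * c ^ 4) := by
          refine Finset.sum_congr rfl fun x _ => ?_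
          have h := pm_sq (x a)
          linear_combination (12 * q x ^ 2 * c ^ 2 + 2 * c ^ 4 * (pm (x a) ^ 2 + 1)) * h
      _ = 2 * (∑ x : Fin n → Bool, q x ^ 4) + 12 * c ^ 2 * (∑ x : Fin n → Bool, q x ^ 2)
          + 2 * c ^ 4 * 2 ^ n := by
          rw [Finset.sum_add_distrib, Finset.sum_add_distrib, ← Finset.mul_sum, ← Finset.mul_sum,
            Finset.sum_const, nsmul_eq_mul, card_cube]
          ring
  linarith

lemma moments (w : Fin (n+1) → ℝ) (A : Finset (Fin n)) :
    (∑ x : Fin n → Bool, (w 0 + ∑ i ∈ A, w i.succ * pm (x i)) ^ 2)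
        = (w 0 ^ 2 + ∑ i ∈ A, w i.succ ^ 2) * 2 ^ n ∧
    (∑ x : Fin n → Bool, (w 0 + ∑ i ∈ A, w i.succ * pm (x i)) ^ 4)
        ≤ 3 * (w 0 ^ 2 + ∑ i ∈ A, w i.succ ^ 2) ^ 2 * 2 ^ n := by
  classical
  induction A using Finset.induction_on with
  | empty =>
      simp only [Finset.sum_empty, add_zero]
      constructor
      · rw [Finset.sum_const, nsmul_eq_mul, card_cube]; ring
      · rw [Finset.sum_const, nsmul_eq_mul, card_cube]
        nlinarith [mul_nonneg (sq_nonneg (w 0 ^ 2)) (pow_nonneg (zero_le_two (α := ℝ)) n)]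
  | insert a A ha ih =>
      set q : (Fin n → Bool) → ℝ := fun x => w 0 + ∑ i ∈ A, w i.succ * pm (x i) with hqdef
      have hq : ∀ x, q (flipAt a x) = q x := by
        intro x
        simp only [hqdef]
        congr 1
        refine Finset.sum_congr rfl fun i hi => ?_
        rw [flipAt_ne a x (fun h => ha (h ▸ hi))]
      have hrw : ∀ x : Fin n → Bool,
          w 0 + ∑ i ∈ insert a A, w i.succ * pm (x i) = q x + w a.succ * pm (x a) := by
        intro x
        rw [Finset.sum_insert ha, hqdef]; ring
      have hs2 := sum_sq_step a q hq (w a.succ)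
      have hs4 := sum_pow4_step a q hq (w a.succ)
      constructor
      · calc ∑ x : Fin n → Bool, (w 0 + ∑ i ∈ insert a A, w i.succ * pm (x i)) ^ 2
            = ∑ x : Fin n → Bool, (q x + w a.succ * pm (x a)) ^ 2 := by
              refine Finset.sum_congr rfl fun x _ => by rw [hrw]
          _ = (∑ x : Fin n → Bool, q x ^ 2) + w a.succ ^ 2 * 2 ^ n := hs2
          _ = (w 0 ^ 2 + ∑ i ∈ insert a A, w i.succ ^ 2) * 2 ^ n := by
              rw [ih.1, Finset.sum_insert ha]; ring
      · calc ∑ x : Fin n → Bool, (w 0 + ∑ i ∈ insert a A, w i.succ * pm (x i)) ^ 4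
            = ∑ x : Fin n → Bool, (q x + w a.succ * pm (x a)) ^ 4 := by
              refine Finset.sum_congr rfl fun x _ => by rw [hrw]
          _ = (∑ x : Fin n → Bool, q x ^ 4) + 6 * w a.succ ^ 2 * (∑ x : Fin n → Bool, q x ^ 2)
              + w a.succ ^ 4 * 2 ^ n := hs4
          _ ≤ 3 * (w 0 ^ 2 + ∑ i ∈ A, w i.succ ^ 2) ^ 2 * 2 ^ n
              + 6 * w a.succ ^ 2 * ((w 0 ^ 2 + ∑ i ∈ A, w i.succ ^ 2) * 2 ^ n)
              + w a.succ ^ 4 * 2 ^ n := by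
              have h2 := ih.2
              rw [ih.1]
              have hc : (0:ℝ) ≤ 6 * w a.succ ^ 2 := by positivity
              linarith
          _ ≤ 3 * (w 0 ^ 2 + ∑ i ∈ insert a A, w i.succ ^ 2) ^ 2 * 2 ^ n := by
              rw [Finset.sum_insert ha]
              have hp : (0:ℝ) ≤ (2:ℝ) ^ n := by positivity
              nlinarith [sq_nonneg (w a.succ ^ 2), sq_nonneg (w a.succ)]

end Hypercube

section Det

variable {n : ℕ}

lemma ltf_abs (w : Fin (n+1) → ℝ) (x : Fin n → Bool) : |ltf n w x| = 1 := by
  unfold ltf sgn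
  split <;> simp

lemma ltf_mul_self (w : Fin (n+1) → ℝ) (x : Fin n → Bool) :
    ltf n w x * (w 0 + ∑ i : Fin n, w i.succ * pm (x i))
      = |w 0 + ∑ i : Fin n, w i.succ * pm (x i)| := by
  unfold ltf sgn
  split_ifs with h
  · rw [abs_of_pos h]; ring
  · rw [abs_of_nonpos (not_lt.1 h)]; ring

lemma infl_nonneg (f : (Fin n → Bool) → ℝ) (i : Fin n) : 0 ≤ infl f i := by
  unfold infl unifPr
  positivity

lemma corr_le_infl (w : Fin (n+1) → ℝ) (i : Fin n) :
    |∑ x : Fin n → Bool, ltf n w x * pm (x i)| ≤ infl (ltf n w) i * 2 ^ n := by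
  classical
  set f := ltf n w with hf
  have hK : (2:ℝ) * ∑ x : Fin n → Bool, f x * pm (x i)
      = ∑ x : Fin n → Bool, (f x - f (flipAt i x)) * pm (x i) := by
    have h1 : ∑ x : Fin n → Bool, f x * pm (x i)
        = - ∑ x : Fin n → Bool, f (flipAt i x) * pm (x i) := by
      rw [← sum_flip i fun x => f x * pm (x i), ← Finset.sum_neg_distrib]
      refine Finset.sum_congr rfl fun x _ => ?_
      rw [flipAt_self, pm_not]
      ring
    calc (2:ℝ) * ∑ x : Fin n → Bool, f x * pm (x i)
        = (∑ x : Fin n → Bool, f x * pm (x i))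
          + (- ∑ x : Fin n → Bool, f (flipAt i x) * pm (x i)) := by rw [← h1]; ring
      _ = ∑ x : Fin n → Bool, (f x - f (flipAt i x)) * pm (x i) := by
          rw [← Finset.sum_neg_distrib, ← Finset.sum_add_distrib]
          exact Finset.sum_congr rfl fun x _ => by ring
  have habs : |∑ x : Fin n → Bool, (f x - f (flipAt i x)) * pm (x i)|
      ≤ ∑ x : Fin n → Bool, (if f x ≠ f (flipAt i x) then (2:ℝ) else 0) := by
    refine (Finset.abs_sum_le_sum_abs _ _).trans (Finset.sum_le_sum fun x _ => ?_)
    rw [abs_mul, pm_abs, mul_one]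
    by_cases h : f x = f (flipAt i x)
    · simp [h]
    · simp only [h, if_pos, ne_eq, not_false_iff]
      calc |f x - f (flipAt i x)| ≤ |f x| + |f (flipAt i x)| := abs_sub _ _
        _ = 2 := by rw [hf, ltf_abs, ltf_abs]; norm_num
  have hcard : ∑ x : Fin n → Bool, (if f x ≠ f (flipAt i x) then (2:ℝ) else 0)
      = 2 * infl f i * 2 ^ n := by
    rw [Finset.sum_ite, Finset.sum_const, Finset.sum_const_zero, add_zero, nsmul_eq_mul]
    unfold infl unifPr
    rw [hf]
    field_simp
    simp [mul_comm]
  have h2 : |(2:ℝ) * ∑ x : Fin n → Bool, f x * pm (x i)| ≤ 2 * infl f i * 2 ^ n := by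
    rw [hK]; exact habs.trans (le_of_eq hcard)
  rw [abs_mul, abs_two] at h2
  linarith [abs_nonneg (∑ x : Fin n → Bool, f x * pm (x i))]

lemma absS_le (w : Fin (n+1) → ℝ) (t : ℝ) (ht : 0 ≤ t)
    (hw : ∀ i : Fin n, |w i.succ| ≤ t) :
    ∑ x : Fin n → Bool, |w 0 + ∑ i : Fin n, w i.succ * pm (x i)|
      ≤ (|w 0| + t * totalInfl (ltf n w)) * 2 ^ n := by
  classical
  set f := ltf n w with hf
  have step1 : ∑ x : Fin n → Bool, |w 0 + ∑ i : Fin n, w i.succ * pm (x i)|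
      = w 0 * (∑ x : Fin n → Bool, f x)
        + ∑ i : Fin n, w i.succ * ∑ x : Fin n → Bool, f x * pm (x i) := by
    have : ∀ x : Fin n → Bool, |w 0 + ∑ i : Fin n, w i.succ * pm (x i)|
        = w 0 * f x + ∑ i : Fin n, w i.succ * (f x * pm (x i)) := by
      intro x
      rw [← ltf_mul_self w x, ← hf]
      rw [mul_add]
      congr 1
      · ring
      · rw [Finset.mul_sum]
        exact Finset.sum_congr rfl fun i _ => by ring
    calc ∑ x : Fin n → Bool, |w 0 + ∑ i : Fin n, w i.succ * pm (x i)|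
        = ∑ x : Fin n → Bool, (w 0 * f x + ∑ i : Fin n, w i.succ * (f x * pm (x i))) :=
          Finset.sum_congr rfl fun x _ => this x
      _ = (∑ x : Fin n → Bool, w 0 * f x)
          + ∑ x : Fin n → Bool, ∑ i : Fin n, w i.succ * (f x * pm (x i)) :=
          Finset.sum_add_distrib
      _ = w 0 * (∑ x : Fin n → Bool, f x)
          + ∑ i : Fin n, w i.succ * ∑ x : Fin n → Bool, f x * pm (x i) := by
          rw [← Finset.mul_sum, Finset.sum_comm]
          congr 1
          exact Finset.sum_congr rfl fun i _ => by rw [Finset.mul_sum]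
  have hterm1 : w 0 * (∑ x : Fin n → Bool, f x) ≤ |w 0| * 2 ^ n := by
    calc w 0 * (∑ x : Fin n → Bool, f x) ≤ |w 0 * ∑ x : Fin n → Bool, f x| := le_abs_self _
      _ = |w 0| * |∑ x : Fin n → Bool, f x| := abs_mul _ _
      _ ≤ |w 0| * 2 ^ n := by
          refine mul_le_mul_of_nonneg_left ?_ (abs_nonneg _)
          calc |∑ x : Fin n → Bool, f x| ≤ ∑ x : Fin n → Bool, |f x| :=
              Finset.abs_sum_le_sum_abs _ _
            _ = 2 ^ n := by
              rw [hf]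
              simp only [ltf_abs]
              rw [Finset.sum_const, nsmul_eq_mul, card_cube, mul_one]
  have hterm2 : ∑ i : Fin n, w i.succ * ∑ x : Fin n → Bool, f x * pm (x i)
      ≤ t * totalInfl f * 2 ^ n := by
    have : ∀ i : Fin n, w i.succ * ∑ x : Fin n → Bool, f x * pm (x i)
        ≤ t * (infl f i * 2 ^ n) := by
      intro i
      calc w i.succ * ∑ x : Fin n → Bool, f x * pm (x i)
          ≤ |w i.succ * ∑ x : Fin n → Bool, f x * pm (x i)| := le_abs_self _
        _ = |w i.succ| * |∑ x : Fin n → Bool, f x * pm (x i)| := abs_mul _ _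
        _ ≤ t * (infl f i * 2 ^ n) := by
            refine mul_le_mul (hw i) (corr_le_infl w i) (abs_nonneg _) ht
    calc ∑ i : Fin n, w i.succ * ∑ x : Fin n → Bool, f x * pm (x i)
        ≤ ∑ i : Fin n, t * (infl f i * 2 ^ n) := Finset.sum_le_sum fun i _ => this i
      _ = t * totalInfl f * 2 ^ n := by
          unfold totalInfl
          rw [← Finset.mul_sum, ← Finset.sum_mul]
          ring
  rw [step1]
  have h := add_le_add hterm1 hterm2
  linarith

end Det

section DetMain

lemma det_bound (n : ℕ) (hn : 1 ≤ n) (w : Fin (n+1) → ℝ) (t : ℝ) (ht : 0 < t)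
    (hw : ∀ i : Fin (n+1), |w i| ≤ t)
    (hσ : (n : ℝ) / 2 ≤ ∑ i : Fin n, w i.succ ^ 2) :
    Real.sqrt ((n:ℝ) / 6) / t - 1 ≤ totalInfl (ltf n w) := by
  classical
  set S : (Fin n → Bool) → ℝ := fun x => w 0 + ∑ i : Fin n, w i.succ * pm (x i) with hS
  set b : ℝ := w 0 ^ 2 + ∑ i : Fin n, w i.succ ^ 2 with hbdef
  set P : ℝ := (2:ℝ) ^ n with hPdef
  have hP : 0 < P := by positivity
  have hbpos : 0 < b := by
    have hn' : (1:ℝ) ≤ (n:ℝ) := by exact_mod_cast hn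
    nlinarith [sq_nonneg (w 0)]
  have hm2 : ∑ x : Fin n → Bool, S x ^ 2 = b * P := (moments w Finset.univ).1
  have hm4 : ∑ x : Fin n → Bool, S x ^ 4 ≤ 3 * b ^ 2 * P := (moments w Finset.univ).2
  set SA : ℝ := ∑ x : Fin n → Bool, |S x| with hSA
  set S3 : ℝ := ∑ x : Fin n → Bool, |S x| ^ 3 with hS3
  have hSAnn : 0 ≤ SA := Finset.sum_nonneg fun x _ => abs_nonneg _
  have hS3nn : 0 ≤ S3 := Finset.sum_nonneg fun x _ => by positivity
  have CS1 : (b * P) ^ 2 ≤ SA * S3 := by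
    have h := Finset.sum_mul_sq_le_sq_mul_sq Finset.univ
      (fun x : Fin n → Bool => Real.sqrt |S x|)
      (fun x : Fin n → Bool => |S x| * Real.sqrt |S x|)
    have e1 : ∑ x : Fin n → Bool, Real.sqrt |S x| * (|S x| * Real.sqrt |S x|)
        = ∑ x : Fin n → Bool, S x ^ 2 := by
      refine Finset.sum_congr rfl fun x _ => ?_
      have h1 : Real.sqrt |S x| * Real.sqrt |S x| = |S x| :=
        Real.mul_self_sqrt (abs_nonneg _)
      calc Real.sqrt |S x| * (|S x| * Real.sqrt |S x|)
          = (Real.sqrt |S x| * Real.sqrt |S x|) * |S x| := by ring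
        _ = |S x| * |S x| := by rw [h1]
        _ = S x ^ 2 := by rw [← sq_abs]; ring
    have e2 : ∑ x : Fin n → Bool, Real.sqrt |S x| ^ 2 = SA := by
      refine Finset.sum_congr rfl fun x _ => Real.sq_sqrt (abs_nonneg _)
    have e3 : ∑ x : Fin n → Bool, (|S x| * Real.sqrt |S x|) ^ 2 = S3 := by
      refine Finset.sum_congr rfl fun x _ => ?_
      rw [mul_pow, Real.sq_sqrt (abs_nonneg _)]
      ring
    rw [e1, e2, e3, hm2] at h
    exact h
  have CS2 : S3 ^ 2 ≤ (b * P) * (3 * b ^ 2 * P) := by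
    have h := Finset.sum_mul_sq_le_sq_mul_sq Finset.univ
      (fun x : Fin n → Bool => |S x|) (fun x : Fin n → Bool => S x ^ 2)
    have e1 : ∑ x : Fin n → Bool, |S x| * S x ^ 2 = S3 := by
      refine Finset.sum_congr rfl fun x _ => ?_
      rw [← sq_abs]; ring
    have e2 : ∑ x : Fin n → Bool, |S x| ^ 2 = ∑ x : Fin n → Bool, S x ^ 2 := by
      refine Finset.sum_congr rfl fun x _ => sq_abs _
    have e3 : ∑ x : Fin n → Bool, (S x ^ 2) ^ 2 = ∑ x : Fin n → Bool, S x ^ 4 := by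
      refine Finset.sum_congr rfl fun x _ => by ring
    rw [e1, e2, e3, hm2] at h
    calc S3 ^ 2 ≤ (b * P) * ∑ x : Fin n → Bool, S x ^ 4 := h
      _ ≤ (b * P) * (3 * b ^ 2 * P) := by
          refine mul_le_mul_of_nonneg_left hm4 ?_
          positivity
  set u : ℝ := Real.sqrt b with hu
  have hu2 : u ^ 2 = b := Real.sq_sqrt hbpos.le
  have hupos : 0 < u := Real.sqrt_pos.mpr hbpos
  set s : ℝ := Real.sqrt 3 with hs
  have hs2 : s ^ 2 = 3 := Real.sq_sqrt (by norm_num)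
  have hspos : 0 < s := Real.sqrt_pos.mpr (by norm_num)
  have hS3le : S3 ≤ s * u ^ 3 * P := by
    have hsq : S3 ^ 2 ≤ (s * u ^ 3 * P) ^ 2 := by
      calc S3 ^ 2 ≤ (b * P) * (3 * b ^ 2 * P) := CS2
        _ = (s * u ^ 3 * P) ^ 2 := by
            rw [← hu2, ← hs2]; ring
    have h1 : S3 = Real.sqrt (S3 ^ 2) := (Real.sqrt_sq hS3nn).symm
    have h2 : Real.sqrt ((s * u ^ 3 * P) ^ 2) = s * u ^ 3 * P := Real.sqrt_sq (by positivity)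
    rw [h1, ← h2]
    exact Real.sqrt_le_sqrt hsq
  have hSAge : u * P ≤ SA * s := by
    have key : u * P * (u ^ 3 * P) ≤ SA * s * (u ^ 3 * P) := by
      have h1 : (b * P) ^ 2 ≤ SA * (s * u ^ 3 * P) :=
        CS1.trans (mul_le_mul_of_nonneg_left hS3le hSAnn)
      calc u * P * (u ^ 3 * P) = (u ^ 2 * P) ^ 2 := by ring
        _ = (b * P) ^ 2 := by rw [hu2]
        _ ≤ SA * (s * u ^ 3 * P) := h1
        _ = SA * s * (u ^ 3 * P) := by ring
    have hpos : 0 < u ^ 3 * P := by positivity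
    exact le_of_mul_le_mul_right key hpos
  have habsS : SA ≤ (|w 0| + t * totalInfl (ltf n w)) * P := by
    have hw' : ∀ i : Fin n, |w i.succ| ≤ t := fun i => hw i.succ
    exact absS_le w t ht.le hw'
  set TI : ℝ := totalInfl (ltf n w) with hTI
  have hmain : u / s ≤ |w 0| + t * TI := by
    have h2 : u * P ≤ (|w 0| + t * TI) * P * s := by
      calc u * P ≤ SA * s := hSAge
        _ ≤ (|w 0| + t * TI) * P * s := by
            refine mul_le_mul_of_nonneg_right habsS hspos.le
    rw [div_le_iff₀ hspos]
    have h3 : u * P ≤ ((|w 0| + t * TI) * s) * P := by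
      calc u * P ≤ (|w 0| + t * TI) * P * s := h2
        _ = ((|w 0| + t * TI) * s) * P := by ring
    exact le_of_mul_le_mul_right h3 hP
  have hsqrt : Real.sqrt ((n:ℝ) / 6) ≤ u / s := by
    rw [hu, hs, ← Real.sqrt_div hbpos.le 3]
    refine Real.sqrt_le_sqrt ?_
    have hb2 : (n:ℝ) / 2 ≤ b := by
      have := sq_nonneg (w 0)
      rw [hbdef]; linarith
    linarith
  have hw0 : |w 0| ≤ t := hw 0
  have hdiv1 : (u / s) / t ≤ 1 + TI := by
    rw [div_le_iff₀ ht]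
    calc u / s ≤ |w 0| + t * TI := hmain
      _ ≤ t + t * TI := by linarith
      _ = (1 + TI) * t := by ring
  have hdiv2 : Real.sqrt ((n:ℝ) / 6) / t ≤ (u / s) / t :=
    (div_le_div_iff_of_pos_right ht).mpr hsqrt
  linarith

end DetMain

open scoped NNReal ENNReal

section Gauss

lemma integral_gaussianReal01 (g : ℝ → ℝ) :
    ∫ x, g x ∂(gaussianReal 0 1) = ∫ x, gaussianPDFReal 0 1 x * g x := by
  rw [gaussianReal_of_var_ne_zero 0 one_ne_zero]
  have hpdf : gaussianPDF 0 1 = fun x => ((Real.toNNReal (gaussianPDFReal 0 1 x) : ℝ≥0) : ℝ≥0∞) :=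
    rfl
  rw [hpdf, integral_withDensity_eq_integral_smul
    ((measurable_gaussianPDFReal 0 1).real_toNNReal) g]
  refine integral_congr_ae (Filter.Eventually.of_forall fun x => ?_)
  simp only [NNReal.smul_def, smul_eq_mul, Real.coe_toNNReal _ (gaussianPDFReal_nonneg 0 1 x)]

lemma pdf01 (x : ℝ) :
    gaussianPDFReal 0 1 x = (Real.sqrt (2 * π))⁻¹ * Real.exp (-(1/2) * x ^ 2) := by
  unfold gaussianPDFReal
  simp only [NNReal.coe_one, mul_one, sub_zero]
  congr 2
  ring

lemma gauss_pdf_exp_eq (c : ℝ) (x : ℝ) :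
    gaussianPDFReal 0 1 x * Real.exp (c * x)
      = (Real.sqrt (2 * π))⁻¹ * Real.exp (c ^ 2 / 2) * Real.exp (-(1/2) * (x - c) ^ 2) := by
  rw [pdf01]
  rw [mul_assoc, ← Real.exp_add, mul_assoc, ← Real.exp_add]
  congr 2
  ring

lemma gauss_mgf_pdf (c : ℝ) :
    ∫ x : ℝ, gaussianPDFReal 0 1 x * Real.exp (c * x) = Real.exp (c ^ 2 / 2) := by
  have hfun : (fun x : ℝ => gaussianPDFReal 0 1 x * Real.exp (c * x))
      = fun x : ℝ => (Real.sqrt (2 * π))⁻¹ * Real.exp (c ^ 2 / 2)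
          * Real.exp (-(1/2) * (x - c) ^ 2) := funext (gauss_pdf_exp_eq c)
  rw [hfun, integral_const_mul]
  have hshift : ∫ x : ℝ, Real.exp (-(1/2) * (x - c) ^ 2)
      = ∫ x : ℝ, Real.exp (-(1/2) * x ^ 2) :=
    integral_sub_right_eq_self (μ := volume) (fun x => Real.exp (-(1/2) * x ^ 2)) c
  rw [hshift, integral_gaussian, show π / (1/2 : ℝ) = 2 * π by ring]
  have h2π : (0:ℝ) < 2 * π := by positivity
  have : Real.sqrt (2 * π) ≠ 0 := ne_of_gt (Real.sqrt_pos.mpr h2π)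
  field_simp

lemma gauss_exp_integrable (c : ℝ) :
    Integrable (fun x : ℝ => gaussianPDFReal 0 1 x * Real.exp (c * x)) := by
  have hfun : (fun x : ℝ => gaussianPDFReal 0 1 x * Real.exp (c * x))
      = fun x : ℝ => (Real.sqrt (2 * π))⁻¹ * Real.exp (c ^ 2 / 2)
          * Real.exp (-(1/2) * (x - c) ^ 2) := funext (gauss_pdf_exp_eq c)
  rw [hfun]
  exact ((integrable_exp_neg_mul_sq (by norm_num : (0:ℝ) < 1/2)).comp_sub_right c).const_mul _

lemma gauss_exp_integrable' (c : ℝ) :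
    Integrable (fun x : ℝ => Real.exp (c * x)) (gaussianReal 0 1) := by
  rw [gaussianReal_of_var_ne_zero 0 one_ne_zero]
  rw [integrable_withDensity_iff (measurable_gaussianPDF 0 1)
    (Filter.Eventually.of_forall fun x => ENNReal.ofReal_lt_top)]
  have : (fun x : ℝ => Real.exp (c * x) * (gaussianPDF 0 1 x).toReal)
      = fun x : ℝ => gaussianPDFReal 0 1 x * Real.exp (c * x) := by
    funext x
    rw [gaussianPDF, ENNReal.toReal_ofReal (gaussianPDFReal_nonneg 0 1 x)]
    ring
  rw [this]
  exact gauss_exp_integrable c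

lemma gauss_tail_upper (t : ℝ) (ht : 0 < t) :
    (gaussianReal 0 1) {x : ℝ | t ≤ x} ≤ ENNReal.ofReal (Real.exp (-(t ^ 2) / 2)) := by
  set γ := gaussianReal 0 1 with hγ
  have hval : ∫ x, Real.exp (t * x) ∂γ = Real.exp (t ^ 2 / 2) := by
    rw [hγ, integral_gaussianReal01]
    exact gauss_mgf_pdf t
  have hmark := mul_meas_ge_le_integral_of_nonneg
    (μ := γ) (f := fun x => Real.exp (t * x))
    (Filter.Eventually.of_forall fun x => (Real.exp_nonneg _))
    (gauss_exp_integrable' t) (Real.exp (t ^ 2))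
  rw [hval] at hmark
  have hsub : {x : ℝ | t ≤ x} ⊆ {x : ℝ | Real.exp (t ^ 2) ≤ Real.exp (t * x)} := by
    intro x hx
    simp only [Set.mem_setOf_eq] at hx ⊢
    exact Real.exp_le_exp.mpr (by nlinarith)
  set B := {x : ℝ | Real.exp (t ^ 2) ≤ Real.exp (t * x)} with hB
  have hfin : γ B ≠ ⊤ := measure_ne_top γ B
  have htr : (γ B).toReal ≤ Real.exp (-(t ^ 2) / 2) := by
    have hexp : (0:ℝ) < Real.exp (t ^ 2) := Real.exp_pos _
    have h1 : (γ B).toReal ≤ Real.exp (t ^ 2 / 2) / Real.exp (t ^ 2) := by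
      rw [le_div_iff₀ hexp]
      rw [measureReal_def] at hmark
      linarith [hmark]
    calc (γ B).toReal ≤ Real.exp (t ^ 2 / 2) / Real.exp (t ^ 2) := h1
      _ = Real.exp (-(t ^ 2) / 2) := by
          rw [← Real.exp_sub]
          congr 1
          ring
  calc γ {x : ℝ | t ≤ x} ≤ γ B := measure_mono hsub
    _ = ENNReal.ofReal ((γ B).toReal) := (ENNReal.ofReal_toReal hfin).symm
    _ ≤ ENNReal.ofReal (Real.exp (-(t ^ 2) / 2)) := ENNReal.ofReal_le_ofReal htr

lemma gauss_map_neg :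
    Measure.map (fun x : ℝ => (-1 : ℝ) * x) (gaussianReal 0 1) = gaussianReal 0 1 := by
  have h := gaussianReal_map_const_mul (μ := 0) (v := 1) (-1 : ℝ)
  have h2 : (⟨(-1 : ℝ)^2, sq_nonneg _⟩ : ℝ≥0) * 1 = 1 := by
    ext
    norm_num
  rw [mul_zero] at h
  have h3 : ((-1 : ℝ) * ·) = (fun x : ℝ => (-1 : ℝ) * x) := rfl
  rw [← h3]
  refine h.trans ?_
  congr 1

lemma gauss_tail_lower (t : ℝ) (ht : 0 < t) :
    (gaussianReal 0 1) {x : ℝ | x ≤ -t} ≤ ENNReal.ofReal (Real.exp (-(t ^ 2) / 2)) := by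
  have hmeas : MeasurableSet {x : ℝ | x ≤ -t} := measurableSet_Iic
  have h1 : (gaussianReal 0 1) {x : ℝ | x ≤ -t}
      = (gaussianReal 0 1) ((fun x : ℝ => (-1 : ℝ) * x) ⁻¹' {x : ℝ | x ≤ -t}) := by
    conv_lhs => rw [← gauss_map_neg]
    rw [Measure.map_apply (by fun_prop) hmeas]
  rw [h1]
  have h2 : ((fun x : ℝ => (-1 : ℝ) * x) ⁻¹' {x : ℝ | x ≤ -t}) = {x : ℝ | t ≤ x} := by
    ext x
    simp only [Set.mem_preimage, Set.mem_setOf_eq]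
    constructor <;> intro h <;> linarith
  rw [h2]
  exact gauss_tail_upper t ht

lemma gauss_tail (t : ℝ) (ht : 0 < t) :
    (gaussianReal 0 1) {x : ℝ | t < |x|} ≤ ENNReal.ofReal (2 * Real.exp (-(t ^ 2) / 2)) := by
  have hsub : {x : ℝ | t < |x|} ⊆ {x : ℝ | t ≤ x} ∪ {x : ℝ | x ≤ -t} := by
    intro x hx
    simp only [Set.mem_setOf_eq, Set.mem_union] at hx ⊢
    rcases lt_abs.mp hx with h | h
    · left; exact le_of_lt h
    · right; linarith
  calc (gaussianReal 0 1) {x : ℝ | t < |x|}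
      ≤ (gaussianReal 0 1) ({x : ℝ | t ≤ x} ∪ {x : ℝ | x ≤ -t}) := measure_mono hsub
    _ ≤ (gaussianReal 0 1) {x : ℝ | t ≤ x} + (gaussianReal 0 1) {x : ℝ | x ≤ -t} :=
        measure_union_le _ _
    _ ≤ ENNReal.ofReal (Real.exp (-(t ^ 2) / 2)) + ENNReal.ofReal (Real.exp (-(t ^ 2) / 2)) :=
        add_le_add (gauss_tail_upper t ht) (gauss_tail_lower t ht)
    _ = ENNReal.ofReal (2 * Real.exp (-(t ^ 2) / 2)) := by
        rw [← ENNReal.ofReal_add (Real.exp_nonneg _) (Real.exp_nonneg _)]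
        congr 1; ring

lemma gauss_halfsq_pdf :
    ∫ x : ℝ, Real.exp (-(1/2) * x ^ 2) ∂(gaussianReal 0 1) = (Real.sqrt 2)⁻¹ := by
  rw [integral_gaussianReal01]
  have hfun : (fun x : ℝ => gaussianPDFReal 0 1 x * Real.exp (-(1/2) * x ^ 2))
      = fun x : ℝ => (Real.sqrt (2 * π))⁻¹ * Real.exp (-(1:ℝ) * x ^ 2) := by
    funext x
    rw [pdf01, mul_assoc, ← Real.exp_add]
    congr 2
    ring
  rw [hfun, integral_const_mul, integral_gaussian]
  rw [Real.sqrt_mul (by norm_num : (0:ℝ) ≤ 2) π]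
  have hπ : (0:ℝ) < π := Real.pi_pos
  have h1 : Real.sqrt π ≠ 0 := ne_of_gt (Real.sqrt_pos.mpr hπ)
  have h2 : Real.sqrt 2 ≠ 0 := ne_of_gt (Real.sqrt_pos.mpr (by norm_num))
  rw [show π / (1:ℝ) = π by ring]
  field_simp

end Gauss

section PiMeasure

lemma coord_tail (n : ℕ) (t : ℝ) (ht : 0 < t) (i : Fin (n+1)) :
    (Measure.pi fun _ : Fin (n+1) => gaussianReal 0 1) {w : Fin (n+1) → ℝ | t < |w i|}
      ≤ ENNReal.ofReal (2 * Real.exp (-(t ^ 2) / 2)) := by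
  classical
  have hset : {w : Fin (n+1) → ℝ | t < |w i|}
      = Set.pi Set.univ
          (Function.update (fun _ : Fin (n+1) => (Set.univ : Set ℝ)) i {x : ℝ | t < |x|}) := by
    rw [← Set.eval_preimage]
    rfl
  rw [hset, Measure.pi_pi]
  have hprod : (∏ j : Fin (n+1), (gaussianReal 0 1)
        (Function.update (fun _ : Fin (n+1) => (Set.univ : Set ℝ)) i {x : ℝ | t < |x|} j))
      = (gaussianReal 0 1) {x : ℝ | t < |x|} := by
    rw [Finset.prod_eq_single i
      (fun b _ hb => by rw [Function.update_of_ne hb]; exact measure_univ)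
      (fun h => absurd (Finset.mem_univ i) h)]
    rw [Function.update_self]
  rw [hprod]
  exact gauss_tail t ht

noncomputable local instance gaussSpace : MeasureSpace ℝ := ⟨gaussianReal 0 1⟩

lemma chernoff_sum_sq (n : ℕ) :
    (Measure.pi fun _ : Fin (n+1) => gaussianReal 0 1)
        {w : Fin (n+1) → ℝ | (∑ i : Fin n, w i.succ ^ 2) < (n : ℝ) / 2}
      ≤ ENNReal.ofReal (Real.exp ((n:ℝ)/4) * ((Real.sqrt 2)⁻¹) ^ n) := by
  classical
  haveI : IsProbabilityMeasure (volume : Measure ℝ) := instIsProbabilityMeasureGaussianReal 0 1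
  set μ : Measure (Fin (n+1) → ℝ) := Measure.pi fun _ : Fin (n+1) => gaussianReal 0 1 with hμ
  have hvol : (volume : Measure (Fin (n+1) → ℝ)) = μ := rfl
  haveI : IsProbabilityMeasure μ := by
    constructor
    rw [hμ, Measure.pi_univ]
    simp
  set g : Fin (n+1) → ℝ → ℝ :=
    fun j x => if j = 0 then 1 else Real.exp (-(1/2) * x ^ 2) with hg
  set G : (Fin (n+1) → ℝ) → ℝ := fun w => ∏ j : Fin (n+1), g j (w j) with hG
  have hgmeas : ∀ j, Measurable (g j) := by
    intro j
    by_cases h : j = 0 <;> simp only [hg, h, if_pos, if_neg, Ne, not_false_iff] <;> measurability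
  have hgle : ∀ j x, ‖g j x‖ ≤ 1 := by
    intro j x
    by_cases h : j = 0
    · simp [hg, h]
    · simp only [hg, h, if_neg, Ne, not_false_iff]
      rw [Real.norm_eq_abs, abs_of_nonneg (Real.exp_nonneg _)]
      rw [Real.exp_le_one_iff]
      nlinarith [sq_nonneg x]
  have hgnn : ∀ j x, 0 ≤ g j x := by
    intro j x
    by_cases h : j = 0
    · simp [hg, h]
    · simp only [hg, h, if_neg, Ne, not_false_iff]
      exact Real.exp_nonneg _
  have hgi : ∀ j, Integrable (g j) (volume : Measure ℝ) := by
    intro j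
    refine Integrable.mono' (integrable_const 1) ((hgmeas j).aestronglyMeasurable) ?_
    exact Filter.Eventually.of_forall fun x => hgle j x
  have hGint : Integrable G (volume : Measure (Fin (n+1) → ℝ)) := Integrable.fintype_prod hgi
  have hGval : ∫ w : Fin (n+1) → ℝ, G w = ((Real.sqrt 2)⁻¹) ^ n := by
    show ∫ w : Fin (n+1) → ℝ, ∏ j : Fin (n+1), g j (w j) = ((Real.sqrt 2)⁻¹) ^ n
    rw [MeasureTheory.integral_fintype_prod_volume_eq_prod g]
    rw [Fin.prod_univ_succ]
    have h0 : ∫ x : ℝ, g 0 x = 1 := by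
      simp only [hg, if_pos rfl]
      simp
    have hsucc : ∀ i : Fin n, ∫ x : ℝ, g i.succ x = (Real.sqrt 2)⁻¹ := by
      intro i
      have hne : i.succ ≠ 0 := Fin.succ_ne_zero i
      simp only [hg, if_neg hne]
      exact gauss_halfsq_pdf
    rw [h0, one_mul]
    rw [Finset.prod_congr rfl fun i _ => hsucc i, Finset.prod_const, Finset.card_univ,
      Fintype.card_fin]
  have hGnn : ∀ w, 0 ≤ G w := fun w => Finset.prod_nonneg fun j _ => hgnn j (w j)
  have hGform : ∀ w : Fin (n+1) → ℝ, G w = Real.exp (-(∑ i : Fin n, w i.succ ^ 2) / 2) := by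
    intro w
    show ∏ j : Fin (n+1), g j (w j) = Real.exp (-(∑ i : Fin n, w i.succ ^ 2) / 2)
    rw [Fin.prod_univ_succ]
    have h0 : g 0 (w 0) = 1 := by simp [hg]
    rw [h0, one_mul]
    have : ∀ i : Fin n, g i.succ (w i.succ) = Real.exp (-(1/2) * w i.succ ^ 2) := by
      intro i
      simp [hg, Fin.succ_ne_zero i]
    rw [Finset.prod_congr rfl fun i _ => this i, ← Real.exp_sum]
    congr 1
    rw [← Finset.mul_sum]
    ring
  have hsub : {w : Fin (n+1) → ℝ | (∑ i : Fin n, w i.succ ^ 2) < (n:ℝ)/2}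
      ⊆ {w : Fin (n+1) → ℝ | Real.exp (-(n:ℝ)/4) ≤ G w} := by
    intro w hw
    simp only [Set.mem_setOf_eq] at hw ⊢
    rw [hGform w]
    apply Real.exp_le_exp.mpr
    linarith
  have hmark := mul_meas_ge_le_integral_of_nonneg
    (μ := (volume : Measure (Fin (n+1) → ℝ)))
    (Filter.Eventually.of_forall hGnn) hGint (Real.exp (-(n:ℝ)/4))
  rw [hGval, hvol] at hmark
  set B := {w : Fin (n+1) → ℝ | Real.exp (-(n:ℝ)/4) ≤ G w} with hB
  have hfinB : μ B ≠ ⊤ := measure_ne_top μ B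
  have htoReal : (μ B).toReal ≤ Real.exp ((n:ℝ)/4) * ((Real.sqrt 2)⁻¹) ^ n := by
    have hepos : (0:ℝ) < Real.exp (-(n:ℝ)/4) := Real.exp_pos _
    calc (μ B).toReal ≤ ((Real.sqrt 2)⁻¹) ^ n / Real.exp (-(n:ℝ)/4) := by
          rw [le_div_iff₀ hepos]
          rw [measureReal_def] at hmark
          linarith [hmark]
      _ = Real.exp ((n:ℝ)/4) * ((Real.sqrt 2)⁻¹) ^ n := by
          rw [show -(n:ℝ)/4 = -((n:ℝ)/4) by ring, Real.exp_neg, div_eq_mul_inv, inv_inv]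
          ring
  calc μ {w : Fin (n+1) → ℝ | (∑ i : Fin n, w i.succ ^ 2) < (n : ℝ) / 2}
      ≤ μ B := measure_mono hsub
    _ = ENNReal.ofReal ((μ B).toReal) := (ENNReal.ofReal_toReal hfinB).symm
    _ ≤ ENNReal.ofReal (Real.exp ((n:ℝ)/4) * ((Real.sqrt 2)⁻¹) ^ n) :=
        ENNReal.ofReal_le_ofReal htoReal

end PiMeasure

section Final

lemma sqrt_n_large {n : ℕ} (hn : 1000000 ≤ n) : (1000:ℝ) ≤ Real.sqrt n := by
  have h1 : Real.sqrt 1000000 = 1000 := by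
    rw [show (1000000:ℝ) = 1000 ^ 2 by norm_num, Real.sqrt_sq (by norm_num)]
  rw [← h1]
  exact Real.sqrt_le_sqrt (by exact_mod_cast hn)

lemma log_le_two_sqrt {n : ℕ} (hn : 1 ≤ n) : Real.log n ≤ 2 * Real.sqrt n := by
  have hn0 : (0:ℝ) < n := by exact_mod_cast hn
  have hs0 : (0:ℝ) < Real.sqrt n := Real.sqrt_pos.mpr hn0
  have h1 : Real.log (Real.sqrt n) ≤ Real.sqrt n - 1 := Real.log_le_sub_one_of_pos hs0
  have h2 : Real.log (Real.sqrt n) = Real.log n / 2 := Real.log_sqrt hn0.le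
  linarith

lemma exp_bound_aux {n : ℕ} (hn : 1000000 ≤ n) :
    Real.exp ((n:ℝ)/4) * ((Real.sqrt 2)⁻¹) ^ n ≤ 1 / n := by
  have hn1 : 1 ≤ n := le_trans (by norm_num) hn
  have hn0 : (0:ℝ) < n := by exact_mod_cast hn1
  have hs2 : (0:ℝ) < Real.sqrt 2 := Real.sqrt_pos.mpr (by norm_num)
  have hpow : (0:ℝ) < (Real.sqrt 2) ^ n := by positivity
  rw [inv_pow, ← div_eq_mul_inv, div_le_div_iff₀ hpow hn0]
  -- goal: exp(n/4) * n ≤ 1 * (√2)^n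
  rw [one_mul]
  have hlog2 : (0.6931471803 : ℝ) < Real.log 2 := Real.log_two_gt_d9
  have hsqrtn := sqrt_n_large hn
  have hlogn := log_le_two_sqrt hn1
  have hnsq : (n:ℝ) = Real.sqrt n * Real.sqrt n := (Real.mul_self_sqrt hn0.le).symm
  -- key exponent inequality
  have hkey : Real.log n + (n:ℝ)/4 ≤ (n:ℝ) * (Real.log 2 / 2) := by
    have h1 : Real.log n ≤ 2 * Real.sqrt n := hlogn
    have h2 : 2 * Real.sqrt n ≤ (n:ℝ) / 100 := by
      nlinarith [hsqrtn, hnsq]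
    have h3 : Real.log n ≤ (n:ℝ) / 100 := h1.trans h2
    nlinarith [hlog2, hn0.le]
  have hrw1 : Real.exp ((n:ℝ)/4) * (n:ℝ) = Real.exp (Real.log n + (n:ℝ)/4) := by
    rw [Real.exp_add, Real.exp_log hn0]
    ring
  have hrw2 : (Real.sqrt 2) ^ n = Real.exp ((n:ℝ) * (Real.log 2 / 2)) := by
    have h1 : Real.sqrt 2 = Real.exp (Real.log 2 / 2) := by
      rw [← Real.log_sqrt (by norm_num : (0:ℝ) ≤ 2)]
      rw [Real.exp_log hs2]
    rw [h1, ← Real.exp_nat_mul]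
  rw [hrw1, hrw2]
  exact Real.exp_le_exp.mpr hkey

theorem random_gaussian_ltf_influence_weak' :
    ∃ c₀ : ℝ, 0 < c₀ ∧ ∃ N : ℕ, ∀ n : ℕ, N ≤ n →
      (Measure.pi fun _ : Fin (n + 1) => gaussianReal 0 1)
          {w : Fin (n + 1) → ℝ | c₀ * Real.sqrt ((n : ℝ) / Real.log n) ≤ totalInfl (ltf n w)} ≥
        ENNReal.ofReal (1 - 4 / (n : ℝ)) := by
  classical
  refine ⟨1/12, by norm_num, 1000000, fun n hn => ?_⟩
  have hn1 : 1 ≤ n := le_trans (by norm_num) hn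
  have hn0 : (0:ℝ) < n := by exact_mod_cast hn1
  have hn2 : (2:ℝ) ≤ n := by
    have : (2:ℕ) ≤ n := le_trans (by norm_num) hn
    exact_mod_cast this
  have hlogpos : 0 < Real.log n := Real.log_pos (by exact_mod_cast lt_of_lt_of_le (by norm_num : (1:ℕ) < 1000000) hn)
  set μ : Measure (Fin (n+1) → ℝ) := Measure.pi fun _ : Fin (n+1) => gaussianReal 0 1 with hμ
  haveI : IsProbabilityMeasure μ := by
    constructor
    rw [hμ, Measure.pi_univ]
    simp
  set t : ℝ := Real.sqrt (6 * Real.log n) with htdef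
  have ht : 0 < t := Real.sqrt_pos.mpr (by positivity)
  have ht2 : t ^ 2 = 6 * Real.log n := Real.sq_sqrt (by positivity)
  set Bad1 : Set (Fin (n+1) → ℝ) := ⋃ i : Fin (n+1), {w : Fin (n+1) → ℝ | t < |w i|} with hB1def
  set Bad2 : Set (Fin (n+1) → ℝ) :=
    {w : Fin (n+1) → ℝ | (∑ i : Fin n, w i.succ ^ 2) < (n : ℝ) / 2} with hB2def
  -- measurability
  have hm1 : MeasurableSet Bad1 := by
    refine MeasurableSet.iUnion fun i => ?_
    exact measurableSet_lt measurable_const ((measurable_pi_apply i).abs)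
  have hm2 : MeasurableSet Bad2 := by
    refine measurableSet_lt ?_ measurable_const
    exact Finset.measurable_sum _ fun i _ => (measurable_pi_apply i.succ).pow_const 2
  -- bound on Bad1
  have hexp3 : Real.exp (-(t ^ 2) / 2) = ((n:ℝ) ^ 3)⁻¹ := by
    rw [ht2, show -(6 * Real.log n) / 2 = -(3 * Real.log n) by ring, Real.exp_neg]
    congr 1
    rw [show (3:ℝ) * Real.log n = Real.log ((n:ℝ) ^ 3) by
      rw [Real.log_pow]; push_cast; ring]
    exact Real.exp_log (by positivity)
  have hB1 : μ Bad1 ≤ ENNReal.ofReal (3 / n) := by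
    calc μ Bad1 ≤ ∑' i : Fin (n+1), μ {w : Fin (n+1) → ℝ | t < |w i|} := measure_iUnion_le _
      _ = ∑ i : Fin (n+1), μ {w : Fin (n+1) → ℝ | t < |w i|} := tsum_fintype _
      _ ≤ ∑ _i : Fin (n+1), ENNReal.ofReal (2 * Real.exp (-(t ^ 2) / 2)) :=
          Finset.sum_le_sum fun i _ => coord_tail n t ht i
      _ = (n+1 : ℕ) * ENNReal.ofReal (2 * Real.exp (-(t ^ 2) / 2)) := by
          rw [Finset.sum_const, Finset.card_univ, Fintype.card_fin, nsmul_eq_mul]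
      _ = ENNReal.ofReal (((n:ℝ)+1) * (2 * ((n:ℝ) ^ 3)⁻¹)) := by
          rw [hexp3, ← ENNReal.ofReal_natCast (n+1), ← ENNReal.ofReal_mul (by positivity)]
          push_cast
          ring_nf
      _ ≤ ENNReal.ofReal (3 / n) := by
          apply ENNReal.ofReal_le_ofReal
          have h3 : (0:ℝ) < (n:ℝ)^3 := by positivity
          rw [show ((n:ℝ)+1) * (2 * ((n:ℝ)^3)⁻¹) = (2*((n:ℝ)+1)) / ((n:ℝ)^3) by ring]
          rw [div_le_div_iff₀ h3 hn0]
          nlinarith [hn2]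
  -- bound on Bad2
  have hB2 : μ Bad2 ≤ ENNReal.ofReal (1 / n) :=
    (chernoff_sum_sq n).trans (ENNReal.ofReal_le_ofReal (exp_bound_aux hn))
  -- union bound
  have hBad : μ (Bad1 ∪ Bad2) ≤ ENNReal.ofReal (4 / n) := by
    calc μ (Bad1 ∪ Bad2) ≤ μ Bad1 + μ Bad2 := measure_union_le _ _
      _ ≤ ENNReal.ofReal (3 / n) + ENNReal.ofReal (1 / n) := add_le_add hB1 hB2
      _ = ENNReal.ofReal (4 / n) := by
          rw [← ENNReal.ofReal_add (by positivity) (by positivity)]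
          congr 1
          field_simp
          ring
  -- good event implies the influence bound
  set Q : ℝ := Real.sqrt ((n:ℝ) / Real.log n) with hQdef
  have hQ12 : (12:ℝ) ≤ Q := by
    have h144 : (144:ℝ) ≤ (n:ℝ) / Real.log n := by
      have hlogle : Real.log n ≤ 2 * Real.sqrt n := log_le_two_sqrt hn1
      have hs0 : (0:ℝ) < Real.sqrt n := Real.sqrt_pos.mpr hn0
      have h1 : (n:ℝ) / (2 * Real.sqrt n) ≤ (n:ℝ) / Real.log n :=
        div_le_div_of_nonneg_left hn0.le hlogpos hlogle
      have h2 : (n:ℝ) / (2 * Real.sqrt n) = Real.sqrt n / 2 := by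
        field_simp
        nlinarith [Real.mul_self_sqrt hn0.le]
      have h3 := sqrt_n_large hn
      rw [h2] at h1
      linarith
    have h12 : (12:ℝ) = Real.sqrt 144 := by
      rw [show (144:ℝ) = 12 ^ 2 by norm_num, Real.sqrt_sq (by norm_num)]
    rw [hQdef, h12]
    exact Real.sqrt_le_sqrt h144
  have hgood : (Bad1 ∪ Bad2)ᶜ ⊆
      {w : Fin (n+1) → ℝ | 1/12 * Real.sqrt ((n : ℝ) / Real.log n) ≤ totalInfl (ltf n w)} := by
    intro w hw
    rw [Set.mem_compl_iff, Set.mem_union] at hw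
    push_neg at hw
    obtain ⟨hw1, hw2⟩ := hw
    have hwt : ∀ i : Fin (n+1), |w i| ≤ t := by
      intro i
      by_contra hcon
      exact hw1 (Set.mem_iUnion.mpr ⟨i, not_le.mp hcon⟩)
    have hwσ : (n:ℝ) / 2 ≤ ∑ i : Fin n, w i.succ ^ 2 := by
      have := hw2
      rw [hB2def, Set.mem_setOf_eq] at this
      linarith [not_lt.mp this]
    have hdet := det_bound n hn1 w t ht hwt hwσ
    -- identify sqrt(n/6)/t with Q/6
    have hQt : Q * t = Real.sqrt (6 * n) := by
      rw [hQdef, htdef, ← Real.sqrt_mul (by positivity : (0:ℝ) ≤ (n:ℝ) / Real.log n)]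
      congr 1
      field_simp
    have h36 : Real.sqrt 36 = 6 := by
      rw [show (36:ℝ) = 6 ^ 2 by norm_num, Real.sqrt_sq (by norm_num)]
    have h16 : Real.sqrt ((n:ℝ)/6) = Real.sqrt (6 * n) / 6 := by
      rw [show ((n:ℝ)/6) = 6 * (n:ℝ) / 36 by ring, Real.sqrt_div (by positivity) 36, h36]
    have hdiv : Real.sqrt ((n:ℝ)/6) / t = Q / 6 := by
      rw [h16, ← hQt]
      field_simp
    rw [hdiv] at hdet
    rw [Set.mem_setOf_eq, ← hQdef]
    linarith
  -- conclude
  have hfinal : ENNReal.ofReal (1 - 4 / (n:ℝ)) ≤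
      μ {w : Fin (n+1) → ℝ | 1/12 * Real.sqrt ((n : ℝ) / Real.log n) ≤ totalInfl (ltf n w)} := by
    have hcompl : μ ((Bad1 ∪ Bad2)ᶜ) = 1 - μ (Bad1 ∪ Bad2) :=
      prob_compl_eq_one_sub (hm1.union hm2)
    calc ENNReal.ofReal (1 - 4 / (n:ℝ))
        = 1 - ENNReal.ofReal (4 / (n:ℝ)) := by
          rw [ENNReal.ofReal_sub 1 (by positivity), ENNReal.ofReal_one]
      _ ≤ 1 - μ (Bad1 ∪ Bad2) := tsub_le_tsub_left hBad 1
      _ = μ ((Bad1 ∪ Bad2)ᶜ) := hcompl.symm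
      _ ≤ _ := measure_mono hgood
  exact hfinal

end Final

/-- a random LTF with i.i.d. standard Gaussian weights has influence
Ω(√(n / log n)) with probability at least 1 − 4/n. -/
theorem random_gaussian_ltf_influence_weak :
    ∃ c₀ : ℝ, 0 < c₀ ∧ ∃ N : ℕ, ∀ n : ℕ, N ≤ n →
      (Measure.pi fun _ : Fin (n + 1) => gaussianReal 0 1)
          {w : Fin (n + 1) → ℝ | c₀ * Real.sqrt ((n : ℝ) / Real.log n) ≤ totalInfl (ltf n w)} ≥
        ENNReal.ofReal (1 - 4 / (n : ℝ)) := by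
  exact random_gaussian_ltf_influence_weak'
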